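/- Continuous embedding of the Banach space of perturbations into the Hilbert space (the inclusion B ⊂ H): For every β < −1 and ρ₀ > 0 there is a constant c > 0, depending only on β and ρ₀, such that every perturbation φ = (v̄, λ̄', Ȳ) with finite norm ‖φ‖_B satisfies ‖φ‖_H ≤ c ‖φ‖_B; in particular B ⊂ H. -/

import Mathlib

/- Formalization preamble for:
   "Small deformations of extreme five-dimensional vacuum black hole initial data"
   Work on ℝ³ (Euclidean); cylindrical radius ρ(x)=√(x₀²+x₁²), axis coordinate z = x₂.
   The measure dΣ = ρ dρ dz dφ is Lebesgue measure on ℝ³. -/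

open MeasureTheory Real
open scoped RealInnerProductSpace BigOperators

noncomputable section

namespace BHMass

/-- ℝ³ as a Euclidean space. -/
abbrev E3 : Type := EuclideanSpace ℝ (Fin 3)

/-- Cylindrical radius ρ. -/
def cylRho (x : E3) : ℝ := Real.sqrt ((x 0) ^ 2 + (x 1) ^ 2)

/-- The solid cylinder K_{ρ₀} = {ρ ≤ ρ₀}. -/
def Kcyl (ρ₀ : ℝ) : Set E3 := {x | cylRho x ≤ ρ₀}

/-- Ω_{ρ₀} = ℝ³ ∖ K_{ρ₀}. -/
def Omg (ρ₀ : ℝ) : Set E3 := {x | ρ₀ < cylRho x}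

/-- σ = √(r² + 1). -/
def sigmaW (x : E3) : ℝ := Real.sqrt (‖x‖ ^ 2 + 1)

/-- Flat gradient on ℝ³. -/
def grad (f : E3 → ℝ) : E3 → E3 := gradient f

/-- Flat Laplacian Δ₃. -/
def lap (f : E3 → ℝ) (x : E3) : ℝ :=
  ∑ i : Fin 3, iteratedFDeriv ℝ 2 f x ![EuclideanSpace.single i 1, EuclideanSpace.single i 1]

/-- Flat divergence ∇· of a vector field. -/
def divg (V : E3 → E3) (x : E3) : ℝ :=
  ∑ i : Fin 3, fderiv ℝ (fun y => V y i) x (EuclideanSpace.single i 1)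

/-- A scalar field is axisymmetric if it depends only on (ρ, z). -/
def Axisym (f : E3 → ℝ) : Prop :=
  ∀ x y : E3, cylRho x = cylRho y → x 2 = y 2 → f x = f y

abbrev Mat2 : Type := Matrix (Fin 2) (Fin 2) ℝ

/-- ∇Yᵗ A ∇Z = Σᵢⱼ Aᵢⱼ ⟪∇Yᵢ, ∇Zⱼ⟫ (gradients contracted with the flat metric). -/
def quadG (A : Mat2) (Y Z : E3 → Fin 2 → ℝ) (x : E3) : ℝ :=
  ∑ i, ∑ j, A i j * ⟪grad (fun y => Y y i) x, grad (fun y => Z y j) x⟫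

/-- aᵗ A b for 2-vectors. -/
def vecQuad (A : Mat2) (a b : Fin 2 → ℝ) : ℝ := ∑ i, ∑ j, a i * A i j * b j

/-- det(∇L) = ∇L₁₁·∇L₂₂ − ∇L₁₂·∇L₁₂. -/
def gradDet (L : E3 → Mat2) (x : E3) : ℝ :=
  ⟪grad (fun y => L y 0 0) x, grad (fun y => L y 1 1) x⟫ -
    ⟪grad (fun y => L y 0 1) x, grad (fun y => L y 0 1) x⟫

/-- A data (or perturbation) triple u = (v, λ', Y). -/
structure Data where
  v : E3 → ℝ
  L : E3 → Mat2
  Y : E3 → Fin 2 → ℝ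

/-- The zero triple. -/
def zeroData : Data := ⟨fun _ => 0, fun _ => 0, fun _ => 0⟩

/-- All components smooth. -/
def SmoothData (u : Data) : Prop :=
  ContDiff ℝ (⊤ : ℕ∞) u.v ∧ (∀ i j, ContDiff ℝ (⊤ : ℕ∞) fun x => u.L x i j) ∧
    ∀ i, ContDiff ℝ (⊤ : ℕ∞) fun x => u.Y x i

/-- All components axisymmetric. -/
def AxisymData (u : Data) : Prop :=
  Axisym u.v ∧ (∀ i j, Axisym fun x => u.L x i j) ∧ ∀ i, Axisym fun x => u.Y x i

/-- λ = e^{2v} λ'. -/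
def lamD (u : Data) (x : E3) : Mat2 := Real.exp (2 * u.v x) • u.L x

/-- X = det λ = e^{4v} ρ². -/
def XD (u : Data) (x : E3) : ℝ := Real.exp (4 * u.v x) * cylRho x ^ 2

/-- u + t·φ. -/
def addS (u φ : Data) (t : ℝ) : Data :=
  ⟨fun x => u.v x + t * φ.v x, fun x => u.L x + t • φ.L x, fun x => u.Y x + t • φ.Y x⟩

/-- The expression σ^{-β} |f| + σ^{-β+1} |∇f| appearing in the C¹_β norm,
    for given pointwise magnitudes m = |f| and dm = |∇f|. -/
def c1Expr (β : ℝ) (m dm : E3 → ℝ) (x : E3) : ℝ :=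
  sigmaW x ^ (-β) * m x + sigmaW x ^ (-β + 1) * dm x

/-- The weighted C¹_β norm over Ω. -/
def c1Norm (β : ℝ) (Ω : Set E3) (m dm : E3 → ℝ) : ℝ := ⨆ x ∈ Ω, c1Expr β m dm x

/-- Finiteness of the C¹_β norm over Ω. -/
def c1Fin (β : ℝ) (Ω : Set E3) (m dm : E3 → ℝ) : Prop := BddAbove (c1Expr β m dm '' Ω)

/-- |M|² = Tr(MᵗM). -/
def matAbsSq (M : Mat2) : ℝ := ∑ i, ∑ j, (M i j) ^ 2

/-- |∇L|² (sum over entries of |∇L_{ij}|²). -/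
def gradMatAbsSq (L : E3 → Mat2) (x : E3) : ℝ := ∑ i, ∑ j, ‖grad (fun y => L y i j) x‖ ^ 2

/-- The Banach norm ‖φ‖_B = ‖v̄‖_{C¹_β(ℝ³)} + ‖λ̄'‖_{C¹_β(Ω_{ρ₀})} + ‖Ȳ‖_{C¹_β(Ω_{ρ₀})},
    where |Ȳ| = (Ȳᵗ λ'₀⁻¹ Ȳ)^{1/2}, |∇Ȳ| = (∇Ȳᵗ λ'₀⁻¹ ∇Ȳ)^{1/2}. -/
def BNorm (β ρ₀ : ℝ) (L0 : E3 → Mat2) (φ : Data) : ℝ :=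
  c1Norm β Set.univ (fun x => |φ.v x|) (fun x => ‖grad φ.v x‖)
  + c1Norm β (Omg ρ₀) (fun x => Real.sqrt (matAbsSq (φ.L x)))
      (fun x => Real.sqrt (gradMatAbsSq φ.L x))
  + c1Norm β (Omg ρ₀) (fun x => Real.sqrt (vecQuad (L0 x)⁻¹ (φ.Y x) (φ.Y x)))
      (fun x => Real.sqrt (quadG (L0 x)⁻¹ φ.Y φ.Y x))

/-- Finiteness of ‖φ‖_B. -/
def FiniteB (β ρ₀ : ℝ) (L0 : E3 → Mat2) (φ : Data) : Prop :=
  c1Fin β Set.univ (fun x => |φ.v x|) (fun x => ‖grad φ.v x‖) ∧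
  c1Fin β (Omg ρ₀) (fun x => Real.sqrt (matAbsSq (φ.L x)))
      (fun x => Real.sqrt (gradMatAbsSq φ.L x)) ∧
  c1Fin β (Omg ρ₀) (fun x => Real.sqrt (vecQuad (L0 x)⁻¹ (φ.Y x) (φ.Y x)))
      (fun x => Real.sqrt (quadG (L0 x)⁻¹ φ.Y φ.Y x))

/-- Perturbation triple: smooth, axisymmetric, λ̄' and Ȳ vanishing on K_{ρ₀},
    λ̄' symmetric with det λ̄' = 0 and Tr(adj(λ'₀) λ̄') = 0. -/
def IsPert (ρ₀ : ℝ) (L0 : E3 → Mat2) (φ : Data) : Prop :=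
  SmoothData φ ∧ AxisymData φ ∧
  (∀ x, cylRho x ≤ ρ₀ → φ.L x = 0 ∧ φ.Y x = 0) ∧
  (∀ x, (φ.L x).IsSymm) ∧
  (∀ x, (φ.L x).det = 0) ∧
  (∀ x, ((L0 x).adjugate * φ.L x).trace = 0)

/-- Membership in the Banach space B. -/
def InB (β ρ₀ : ℝ) (L0 : E3 → Mat2) (φ : Data) : Prop :=
  IsPert ρ₀ L0 φ ∧ FiniteB β ρ₀ L0 φ

/-- The Hilbert norm squared ‖φ‖²_H = ‖v̄‖²_{H₁} + ‖λ̄'‖²_{H₂} + ‖Ȳ‖²_{H₃}. -/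
def HNormSq (ρ₀ : ℝ) (L0 : E3 → Mat2) (φ : Data) : ℝ :=
  (∫ x : E3, (‖grad φ.v x‖ ^ 2 / ‖x‖ ^ 2 + (φ.v x) ^ 2 / ‖x‖ ^ 4)) +
  (∫ x in Omg ρ₀, (gradMatAbsSq φ.L x / cylRho x ^ 2 + matAbsSq (φ.L x) / cylRho x ^ 4)) +
  (∫ x in Omg ρ₀, (quadG (L0 x)⁻¹ φ.Y φ.Y x / cylRho x ^ 2
      + vecQuad (L0 x)⁻¹ (φ.Y x) (φ.Y x) / cylRho x ^ 4))

/-- Bulk integrand of the mass functional. -/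
def massIntegrand (u : Data) (x : E3) : ℝ :=
  -gradDet u.L x / (2 * cylRho x ^ 2)
  + Real.exp (-(6 : ℝ) * u.v x) * quadG (u.L x)⁻¹ u.Y u.Y x / (2 * cylRho x ^ 2)
  + 6 * ‖grad u.v x‖ ^ 2

/-- The mass functional 𝓜, with rod boundary term R. -/
def massFun (R : (E3 → Mat2) → ℝ) (u : Data) : ℝ :=
  (1 / 8) * (∫ x : E3, massIntegrand u x) + R u.L

/-- The rod term depends only on λ' on the cylinder K_{ρ₀} (a neighbourhood of the
    axis), hence is unchanged by perturbations vanishing on K_{ρ₀}. -/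
def RodLocal (ρ₀ : ℝ) (R : (E3 → Mat2) → ℝ) : Prop :=
  ∀ L L' : E3 → Mat2, (∀ x, cylRho x ≤ ρ₀ → L x = L' x) → R L = R L'

/-- First stationary (Euler–Lagrange) equation: 4Δ₃v + X⁻¹ ∇Yᵗ λ⁻¹ ∇Y = 0. -/
def EL1 (u : Data) (x : E3) : Prop :=
  4 * lap u.v x + quadG (lamD u x)⁻¹ u.Y u.Y x / XD u x = 0

/-- Second stationary equation: ∇·(ρ⁻² ∇λ') + X⁻² e^{2v} ∇Y ∇Yᵗ = 0. -/
def EL2 (u : Data) (x : E3) : Prop :=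
  ∀ i j, divg (fun y => (cylRho y ^ 2)⁻¹ • grad (fun z => u.L z i j) y) x
    + Real.exp (2 * u.v x) / XD u x ^ 2 *
        ⟪grad (fun y => u.Y y i) x, grad (fun y => u.Y y j) x⟫ = 0

/-- Third stationary equation: ∇·(X⁻¹ λ⁻¹ ∇Y) = 0. -/
def EL3 (u : Data) (x : E3) : Prop :=
  ∀ i, divg (fun y => (XD u y)⁻¹ • ∑ j, ((lamD u y)⁻¹ i j) • grad (fun z => u.Y z j) y) x = 0

/-- |∇λ λ⁻¹|² (entrywise, gradients contracted with the flat metric). -/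
def gradLamLamInvSq (u : Data) (x : E3) : ℝ :=
  ∑ i, ∑ j, ‖∑ k, ((lamD u x)⁻¹ k j) • grad (fun y => lamD u y i k) x‖ ^ 2

/-- The bounds defining the extreme class (Definition 1, items 1–4); all pointwise
    bounds are imposed on the region ρ ≤ r². -/
def ExtremeBounds (ρ₀ : ℝ) (u : Data) : Prop :=
  ∃ C C₁ C₂ C₃ C₄ C' : ℝ, 0 < C ∧ 0 < C₁ ∧ 0 < C₂ ∧ 0 < C₃ ∧ 0 < C₄ ∧ 0 < C' ∧
    (∀ x : E3, 0 < cylRho x → cylRho x ≤ ‖x‖ ^ 2 →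
      quadG (lamD u x)⁻¹ u.Y u.Y x / XD u x ≤ C / ‖x‖ ^ 4 ∧
      Real.exp (-(2 : ℝ) * u.v x) * quadG (lamD u x)⁻¹ u.Y u.Y x / XD u x ≤ C / ‖x‖ ^ 2 ∧
      cylRho x ^ 2 ≤ XD u x ∧
      ‖grad u.v x‖ ^ 2 ≤ C / ‖x‖ ^ 4 ∧
      ‖grad (fun y => Real.log (XD u y)) x‖ ^ 2 ≤ C / cylRho x ^ 2) ∧
    (∀ x ∈ Omg ρ₀, cylRho x ≤ ‖x‖ ^ 2 →
      (lamD u x - (C₁ * cylRho x) • (1 : Mat2)).PosSemidef ∧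
      ((C₂ * cylRho x) • (1 : Mat2) - lamD u x).PosSemidef ∧
      ((lamD u x)⁻¹ - (C₃ / cylRho x) • (1 : Mat2)).PosSemidef ∧
      ((C₄ / cylRho x) • (1 : Mat2) - (lamD u x)⁻¹).PosSemidef ∧
      XD u x ^ 2 ≤ C' * cylRho x ^ 4 ∧
      gradLamLamInvSq u x ≤ C / cylRho x ^ 2)

/-- The potential X_t⁻¹ Ȳᵗ λ_t⁻¹ Ȳ + 16 v̄² whose Laplacian carries the boundary
    term in the integrated Carter identity. -/
def carterPot (u φ : Data) (t : ℝ) (y : E3) : ℝ :=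
  vecQuad (lamD (addS u φ t) y)⁻¹ (φ.Y y) (φ.Y y) / XD (addS u φ t) y + 16 * (φ.v y) ^ 2

/-- Rendering of condition (ii) of the extreme class: the decay and boundary
    conditions make all boundary terms arising in integration by parts against
    perturbations in B vanish (the total divergences integrate to zero). -/
def NoBoundaryTerms (β ρ₀ : ℝ) (u : Data) : Prop :=
  ∀ φ : Data, InB β ρ₀ u.L φ → ∀ t ∈ Set.Ico (0 : ℝ) 1,
    (∫ x : E3, lap (carterPot u φ t) x) = 0

/-- The extreme class E (Definition 1): smooth axisymmetric data with symmetric,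
    positive-definite λ'₀, det λ'₀ = ρ², satisfying the stationary field
    equations, the boundary conditions, and the extreme bounds. -/
def IsExtremeData (β ρ₀ : ℝ) (u : Data) : Prop :=
  SmoothData u ∧ AxisymData u ∧
  (∀ x, (u.L x).IsSymm) ∧
  (∀ x, (u.L x).det = cylRho x ^ 2) ∧
  (∀ x, 0 < cylRho x → (u.L x).PosDef) ∧
  (∀ x, 0 < cylRho x → EL1 u x ∧ EL2 u x ∧ EL3 u x) ∧
  NoBoundaryTerms β ρ₀ u ∧
  ExtremeBounds ρ₀ u

/-- Integrand of the second variation E''_φ(t). -/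
def svIntegrand (u φ : Data) (t : ℝ) (x : E3) : ℝ :=
  let w := addS u φ t
  12 * ‖grad φ.v x‖ ^ 2 - gradDet φ.L x / cylRho x ^ 2
  + Real.exp (-(6 : ℝ) * w.v x) / cylRho x ^ 4 *
      (2 * quadG (φ.L x).adjugate w.Y φ.Y x
        + quadG (w.L x).adjugate φ.Y φ.Y x
        - 6 * φ.v x * quadG (φ.L x).adjugate w.Y w.Y x
        - 12 * φ.v x * quadG (w.L x).adjugate w.Y φ.Y x
        + 18 * (φ.v x) ^ 2 * quadG (w.L x).adjugate w.Y w.Y x)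

/-- The second variation E''_φ(t). -/
def secondVar (u φ : Data) (t : ℝ) : ℝ := (1 / 8) * ∫ x : E3, svIntegrand u φ t x

/-- λ̄ = 2 v̄ λ + λ λ'⁻¹ λ̄'. -/
def lamBar (w φ : Data) (x : E3) : Mat2 :=
  (2 * φ.v x) • lamD w x + lamD w x * (w.L x)⁻¹ * φ.L x

/-- U₁ = X⁻¹ λ⁻¹ Ȳ. -/
def U1f (w φ : Data) (y : E3) : Fin 2 → ℝ := fun i =>
  (XD w y)⁻¹ * ∑ j, (lamD w y)⁻¹ i j * φ.Y y j

/-- U₂ = X⁻¹ λ⁻¹ ∇Y. -/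
def U2f (w : Data) (x : E3) (i : Fin 2) : E3 :=
  (XD w x)⁻¹ • ∑ j, ((lamD w x)⁻¹ i j) • grad (fun y => w.Y y j) x

/-- δU₂ = X⁻¹ λ⁻¹ ∇Ȳ − X⁻¹ λ⁻¹ λ̄ λ⁻¹ ∇Y − 4 v̄ U₂. -/
def dU2 (w φ : Data) (x : E3) (i : Fin 2) : E3 :=
  (XD w x)⁻¹ • ∑ j, ((lamD w x)⁻¹ i j) • grad (fun y => φ.Y y j) x
  - (XD w x)⁻¹ •
      ∑ j, (((lamD w x)⁻¹ * lamBar w φ x * (lamD w x)⁻¹) i j) • grad (fun y => w.Y y j) x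
  - (4 * φ.v x) • U2f w x i

/-- The matrix field ∇(λ̄ λ⁻¹) + X⁻¹ ∇Y Ȳᵗ λ⁻¹ (entries are vectors). -/
def MmatF (w φ : Data) (x : E3) (i j : Fin 2) : E3 :=
  grad (fun y => (lamBar w φ y * (lamD w y)⁻¹) i j) x
  + ((XD w x)⁻¹ * ∑ k, φ.Y x k * (lamD w x)⁻¹ k j) • grad (fun y => w.Y y i) x

/-- The manifestly nonnegative right-hand side F of the five-dimensional
    Carter identity. -/
def Fquant (w φ : Data) (x : E3) : ℝ :=
  ‖(4 : ℝ) • grad φ.v x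
      + (XD w x)⁻¹ • ∑ i, ∑ j, (φ.Y x i * (lamD w x)⁻¹ i j) • grad (fun y => w.Y y j) x‖ ^ 2
  + XD w x * ((∑ i, ∑ j, lamD w x i j * ⟪dU2 w φ x i, dU2 w φ x j⟫)
      + ∑ i, ∑ j, lamD w x i j *
          ⟪grad (fun y => U1f w φ y i) x, grad (fun y => U1f w φ y j) x⟫)
  + ∑ i, ∑ j, ⟪MmatF w φ x i j, MmatF w φ x j i⟫

/-- G_X = 4Δ₃v + X⁻¹ ∇Yᵗ λ⁻¹ ∇Y. -/
def GX (w : Data) (x : E3) : ℝ := 4 * lap w.v x + quadG (lamD w x)⁻¹ w.Y w.Y x / XD w x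

/-- G_λ = ∇·(λ⁻¹∇λ) + X⁻¹ λ⁻¹ ∇Y·∇Yᵗ. -/
def Glam (w : Data) (x : E3) : Mat2 := Matrix.of fun i j =>
  divg (fun y => ∑ k, ((lamD w y)⁻¹ i k) • grad (fun z => lamD w z k j) y) x
  + (XD w x)⁻¹ * ∑ k, (lamD w x)⁻¹ i k *
      ⟪grad (fun y => w.Y y k) x, grad (fun y => w.Y y j) x⟫

/-- G_Y = ∇·(X⁻¹ λ⁻¹ ∇Y). -/
def GYv (w : Data) (x : E3) : Fin 2 → ℝ := fun i =>
  divg (fun y => (XD w y)⁻¹ • ∑ j, ((lamD w y)⁻¹ i j) • grad (fun z => w.Y z j) y) x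

/-- Linearized operator Ġ_X at data w in direction φ. -/
def GXdot (w φ : Data) (x : E3) : ℝ :=
  4 * lap φ.v x + Real.exp (-(6 : ℝ) * w.v x) / cylRho x ^ 4 *
    (2 * quadG (w.L x).adjugate φ.Y w.Y x
      + quadG (φ.L x).adjugate w.Y w.Y x
      - 6 * φ.v x * quadG (w.L x).adjugate w.Y w.Y x)

/-- δ(λ'⁻¹ ∇λ') = λ'⁻¹ ∇λ̄' − λ'⁻¹ λ̄' λ'⁻¹ ∇λ' (first variation of λ'⁻¹∇λ'). -/
def deltaLinvGradL (w φ : Data) (y : E3) (i j : Fin 2) : E3 :=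
  ∑ k, ((w.L y)⁻¹ i k) • grad (fun z => φ.L z k j) y
  - ∑ k, (((w.L y)⁻¹ * φ.L y * (w.L y)⁻¹) i k) • grad (fun z => w.L z k j) y

/-- Linearized operator Ġ_λ at data w in direction φ. -/
def Gldot (w φ : Data) (x : E3) : Mat2 := Matrix.of fun i j =>
  2 * lap φ.v x * ((1 : Mat2) i j)
  + divg (fun y => deltaLinvGradL w φ y i j) x
  + Real.exp (-(6 : ℝ) * w.v x) / cylRho x ^ 4 *
      (2 * ∑ k, (w.L x).adjugate i k *
          ⟪grad (fun y => w.Y y k) x, grad (fun y => φ.Y y j) x⟫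
        + ∑ k, (φ.L x).adjugate i k *
            ⟪grad (fun y => w.Y y k) x, grad (fun y => w.Y y j) x⟫
        - 6 * φ.v x * ∑ k, (w.L x).adjugate i k *
            ⟪grad (fun y => w.Y y k) x, grad (fun y => w.Y y j) x⟫)

/-- Linearized operator Ġ_Y at data w in direction φ. -/
def GYdot (w φ : Data) (x : E3) : Fin 2 → ℝ := fun i =>
  divg (fun y => (Real.exp (-(6 : ℝ) * w.v y) / cylRho y ^ 4) •
      (∑ j, ((w.L y).adjugate i j) • grad (fun z => φ.Y z j) y
        + ∑ j, ((φ.L y).adjugate i j) • grad (fun z => w.Y z j) y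
        - (6 * φ.v y) • ∑ j, ((w.L y).adjugate i j) • grad (fun z => w.Y z j) y)) x


/-! ### Auxiliary material for the proof of `B_embeds_in_H` -/

section Embedding

open Filter

/-! #### Basic facts about `sigmaW`, `cylRho`, norms -/

lemma sigmaW_sq (x : E3) : sigmaW x ^ 2 = ‖x‖ ^ 2 + 1 := Real.sq_sqrt (by positivity)

lemma sigmaW_pos (x : E3) : 0 < sigmaW x := Real.sqrt_pos.mpr (by positivity)

lemma one_le_sigmaW_sq (x : E3) : 1 ≤ sigmaW x ^ 2 := by
  rw [sigmaW_sq]; nlinarith [sq_nonneg ‖x‖]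

lemma one_le_sigmaW (x : E3) : 1 ≤ sigmaW x := by
  nlinarith [one_le_sigmaW_sq x, sigmaW_pos x]

lemma cylRho_sq (x : E3) : cylRho x ^ 2 = x 0 ^ 2 + x 1 ^ 2 := Real.sq_sqrt (by positivity)

lemma norm_sq_eq3 (x : E3) : ‖x‖ ^ 2 = x 0 ^ 2 + x 1 ^ 2 + x 2 ^ 2 := by
  rw [EuclideanSpace.norm_eq, Real.sq_sqrt (by positivity)]
  simp [Fin.sum_univ_three, Real.norm_eq_abs, sq_abs]

lemma norm_grad (f : E3 → ℝ) (x : E3) : ‖grad f x‖ = ‖fderiv ℝ f x‖ := by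
  show ‖gradient f x‖ = ‖fderiv ℝ f x‖
  rw [gradient]
  exact LinearIsometryEquiv.norm_map _ _

/-! #### The `C¹_β` norm: nonnegativity and pointwise bounds -/

lemma c1Expr_nonneg {β : ℝ} {m dm : E3 → ℝ} {x : E3} (hm : 0 ≤ m x) (hd : 0 ≤ dm x) :
    0 ≤ c1Expr β m dm x :=
  add_nonneg (mul_nonneg (Real.rpow_nonneg (sigmaW_pos x).le _) hm)
    (mul_nonneg (Real.rpow_nonneg (sigmaW_pos x).le _) hd)

lemma c1Norm_nonneg {β : ℝ} {Ω : Set E3} {m dm : E3 → ℝ}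
    (hm : ∀ x, 0 ≤ m x) (hd : ∀ x, 0 ≤ dm x) : 0 ≤ c1Norm β Ω m dm :=
  Real.iSup_nonneg fun x => Real.iSup_nonneg fun _ => c1Expr_nonneg (hm x) (hd x)

lemma le_c1Norm {β : ℝ} {Ω : Set E3} {m dm : E3 → ℝ} (hfin : c1Fin β Ω m dm)
    {x : E3} (hx : x ∈ Ω) : c1Expr β m dm x ≤ c1Norm β Ω m dm := by
  obtain ⟨b, hb⟩ := hfin
  have hbdd : BddAbove (Set.range fun y => ⨆ _ : y ∈ Ω, c1Expr β m dm y) := by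
    refine ⟨max b 0, ?_⟩
    rintro t ⟨y, rfl⟩
    show (⨆ _ : y ∈ Ω, c1Expr β m dm y) ≤ max b 0
    by_cases hy : y ∈ Ω
    · haveI : Nonempty (y ∈ Ω) := ⟨hy⟩
      rw [ciSup_const]
      exact le_max_of_le_left (hb (Set.mem_image_of_mem _ hy))
    · haveI : IsEmpty (y ∈ Ω) := ⟨hy⟩
      rw [Real.iSup_of_isEmpty]
      exact le_max_right _ _
  have h1 : c1Expr β m dm x = ⨆ _ : x ∈ Ω, c1Expr β m dm x := by
    haveI : Nonempty (x ∈ Ω) := ⟨hx⟩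
    exact ciSup_const.symm
  rw [h1]
  exact le_ciSup hbdd x

lemma c1_bound_m {β : ℝ} {Ω : Set E3} {m dm : E3 → ℝ} (hfin : c1Fin β Ω m dm) {x : E3}
    (hm : 0 ≤ m x) (hd : 0 ≤ dm x) (hx : x ∈ Ω) :
    m x ≤ sigmaW x ^ β * c1Norm β Ω m dm := by
  have h := le_c1Norm hfin hx
  have hσ := sigmaW_pos x
  have h1 : sigmaW x ^ (-β) * m x ≤ c1Norm β Ω m dm :=
    le_trans (le_add_of_nonneg_right (mul_nonneg (Real.rpow_nonneg hσ.le _) hd)) h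
  have h2 : m x = sigmaW x ^ β * (sigmaW x ^ (-β) * m x) := by
    rw [← mul_assoc, ← Real.rpow_add hσ]
    simp
  rw [h2]
  exact mul_le_mul_of_nonneg_left h1 (Real.rpow_nonneg hσ.le _)

lemma c1_bound_dm {β : ℝ} {Ω : Set E3} {m dm : E3 → ℝ} (hfin : c1Fin β Ω m dm) {x : E3}
    (hm : 0 ≤ m x) (hd : 0 ≤ dm x) (hx : x ∈ Ω) :
    dm x ≤ sigmaW x ^ (β - 1) * c1Norm β Ω m dm := by
  have h := le_c1Norm hfin hx
  have hσ := sigmaW_pos x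
  have h1 : sigmaW x ^ (-β + 1) * dm x ≤ c1Norm β Ω m dm :=
    le_trans (le_add_of_nonneg_left (mul_nonneg (Real.rpow_nonneg hσ.le _) hm)) h
  have h2 : dm x = sigmaW x ^ (β - 1) * (sigmaW x ^ (-β + 1) * dm x) := by
    rw [← mul_assoc, ← Real.rpow_add hσ, show β - 1 + (-β + 1) = 0 by ring,
      Real.rpow_zero, one_mul]
  rw [h2]
  exact mul_le_mul_of_nonneg_left h1 (Real.rpow_nonneg hσ.le _)

/-! #### Nonnegativity of the quadratic forms -/

lemma vecQuad_nonneg {A : Mat2} (hA : A.PosSemidef) (a : Fin 2 → ℝ) : 0 ≤ vecQuad A a a := by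
  have h := hA.dotProduct_mulVec_nonneg a
  simp only [RCLike.re_to_real, star_trivial] at h
  refine h.trans_eq ?_
  simp only [vecQuad, dotProduct, Matrix.mulVec, Finset.mul_sum]
  exact Finset.sum_congr rfl fun i _ => Finset.sum_congr rfl fun j _ => by ring

lemma quadG_nonneg {A : Mat2} (hA : A.PosSemidef) (Y : E3 → Fin 2 → ℝ) (x : E3) :
    0 ≤ quadG A Y Y x := by
  have hrw : quadG A Y Y x = ∑ k : Fin 3,
      vecQuad A (fun i => grad (fun y => Y y i) x k) (fun i => grad (fun y => Y y i) x k) := by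
    simp only [quadG, vecQuad, PiLp.inner_apply, RCLike.inner_apply, conj_trivial]
    calc ∑ i, ∑ j, A i j * ∑ k, grad (fun y => Y y j) x k * grad (fun y => Y y i) x k
        = ∑ i, ∑ j, ∑ k : Fin 3, grad (fun y => Y y i) x k * A i j * grad (fun y => Y y j) x k := by
          refine Finset.sum_congr rfl fun i _ => Finset.sum_congr rfl fun j _ => ?_
          rw [Finset.mul_sum]
          exact Finset.sum_congr rfl fun k _ => by ring
      _ = ∑ i, ∑ k : Fin 3, ∑ j, grad (fun y => Y y i) x k * A i j * grad (fun y => Y y j) x k :=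
          Finset.sum_congr rfl fun i _ => Finset.sum_comm
      _ = ∑ k : Fin 3, ∑ i, ∑ j, grad (fun y => Y y i) x k * A i j * grad (fun y => Y y j) x k :=
          Finset.sum_comm
  rw [hrw]
  exact Finset.sum_nonneg fun k _ => vecQuad_nonneg hA _
/-! #### The integrable dominating function -/

/-- One-dimensional factor of the dominating function. -/
def gfun (e : ℝ) (t : ℝ) : ℝ := min 1 (t ^ 2) ^ (-(1 : ℝ)/3) * (1 + t ^ 2) ^ e

lemma gfun_nonneg (e t : ℝ) : 0 ≤ gfun e t :=
  mul_nonneg (Real.rpow_nonneg (le_min zero_le_one (sq_nonneg t)) _)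
    (Real.rpow_nonneg (by positivity) _)

set_option maxHeartbeats 1600000 in
lemma gfun_integrable {e : ℝ} (he : 2 * e < -1) : Integrable (gfun e) := by
  have he0 : e < 0 := by linarith
  have h2 : Integrable (fun t : ℝ => (1 + t ^ 2) ^ e) := by
    have h := integrable_rpow_neg_one_add_norm_sq (E := ℝ) (μ := volume) (r := -(2 * e))
      (by rw [Module.finrank_self]; push_cast; linarith)
    simpa [Real.norm_eq_abs, sq_abs, show -(-(2 * e)) / 2 = e by ring] using h
  have h01 : IntervalIntegrable (fun t : ℝ => (t ^ 2) ^ (-(1 : ℝ)/3)) volume 0 1 := by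
    rw [intervalIntegrable_iff_integrableOn_Ioc_of_le zero_le_one]
    have h := intervalIntegral.intervalIntegrable_rpow' (a := 0) (b := 1)
      (r := -(2/3)) (by norm_num)
    rw [intervalIntegrable_iff_integrableOn_Ioc_of_le zero_le_one] at h
    refine h.congr_fun (fun t ht => ?_) measurableSet_Ioc
    rw [← Real.rpow_natCast t 2, ← Real.rpow_mul ht.1.le]
    norm_num
  have hneg : IntervalIntegrable (fun t : ℝ => (t ^ 2) ^ (-(1 : ℝ)/3)) volume (-1) 0 := by
    have h := (IntervalIntegrable.iff_comp_neg (by simp)).mp h01.symm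
    simpa only [neg_sq, neg_zero] using h
  have htot := hneg.trans h01
  rw [intervalIntegrable_iff_integrableOn_Ioc_of_le (by norm_num : (-1:ℝ) ≤ 1)] at htot
  have hF : IntegrableOn (fun t : ℝ => (t ^ 2) ^ (-(1 : ℝ)/3)) (Set.Icc (-1 : ℝ) 1) := by
    rw [integrableOn_Icc_iff_integrableOn_Ioc]
    exact htot
  have h1 : Integrable ((Set.Icc (-1 : ℝ) 1).indicator fun t : ℝ => (t ^ 2) ^ (-(1 : ℝ)/3)) :=
    hF.integrable_indicator measurableSet_Icc
  refine (h1.add h2).mono' ?_ (Filter.Eventually.of_forall fun t => ?_)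
  · refine Measurable.aestronglyMeasurable ?_
    unfold gfun
    fun_prop
  · rw [Real.norm_eq_abs, abs_of_nonneg (gfun_nonneg e t), Pi.add_apply]
    rcases le_or_gt (t ^ 2) 1 with h | h
    · have ht : t ∈ Set.Icc (-1 : ℝ) 1 := by
        constructor <;> nlinarith
      rw [Set.indicator_of_mem ht]
      have hle : gfun e t ≤ (t ^ 2) ^ (-(1 : ℝ)/3) := by
        rw [gfun, min_eq_right h]
        exact mul_le_of_le_one_right (Real.rpow_nonneg (sq_nonneg t) _)
          (Real.rpow_le_one_of_one_le_of_nonpos (by nlinarith) he0.le)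
      have h2nn : (0 : ℝ) ≤ (1 + t ^ 2) ^ e := Real.rpow_nonneg (by positivity) _
      linarith
    · rw [gfun, min_eq_left h.le, Real.one_rpow, one_mul]
      exact le_add_of_nonneg_left
        (Set.indicator_nonneg (fun s _ => Real.rpow_nonneg (sq_nonneg s) _) t)

/-- Dominating function on `ℝ³`. -/
def Gdom (β : ℝ) (x : E3) : ℝ :=
  gfun (β/4 - 3/8) (x 0) * gfun (β/4 - 3/8) (x 1) * gfun (β/2 - 1/4) (x 2)

lemma Gdom_nonneg (β : ℝ) (x : E3) : 0 ≤ Gdom β x :=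
  mul_nonneg (mul_nonneg (gfun_nonneg _ _) (gfun_nonneg _ _)) (gfun_nonneg _ _)

set_option maxHeartbeats 1600000 in
lemma Gdom_integrable {β : ℝ} (hβ : β < -1) : Integrable (Gdom β) := by
  classical
  have hint : ∀ i : Fin 3, Integrable
      (fun t => if i = 2 then gfun (β/2 - 1/4) t else gfun (β/4 - 3/8) t) := by
    intro i
    rcases eq_or_ne i 2 with hi | hi
    · simpa [hi] using gfun_integrable (show 2 * (β/2 - 1/4) < -1 by linarith)
    · simpa [hi] using gfun_integrable (show 2 * (β/4 - 3/8) < -1 by linarith)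
  have hpi : Integrable (fun y : Fin 3 → ℝ =>
      ∏ i : Fin 3, (if i = 2 then gfun (β/2 - 1/4) (y i) else gfun (β/4 - 3/8) (y i))) := by
    have := Integrable.fintype_prod (𝕜 := ℝ)
      (f := fun i : Fin 3 => fun t => if i = 2 then gfun (β/2 - 1/4) t else gfun (β/4 - 3/8) t)
      hint
    simpa [MeasureTheory.volume_pi] using this
  have hmp := (EuclideanSpace.volume_preserving_symm_measurableEquiv_toLp (Fin 3)).integrable_comp_emb
      (MeasurableEquiv.toLp 2 (Fin 3 → ℝ)).symm.measurableEmbedding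
      (g := fun y : Fin 3 → ℝ =>
        ∏ i : Fin 3, (if i = 2 then gfun (β/2 - 1/4) (y i) else gfun (β/4 - 3/8) (y i)))
  have hcomp := hmp.mpr hpi
  have heq : ((fun y : Fin 3 → ℝ =>
      ∏ i : Fin 3, (if i = 2 then gfun (β/2 - 1/4) (y i) else gfun (β/4 - 3/8) (y i))) ∘
        (MeasurableEquiv.toLp 2 (Fin 3 → ℝ)).symm) = Gdom β := by
    funext x
    show (∏ i : Fin 3, (if i = 2 then gfun (β/2 - 1/4) (x i) else gfun (β/4 - 3/8) (x i)))
      = Gdom β x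
    rw [Fin.prod_univ_three, if_neg (by decide : ¬(0 : Fin 3) = 2),
      if_neg (by decide : ¬(1 : Fin 3) = 2), if_pos rfl]
    rfl
  rwa [heq] at hcomp

/-! #### Coordinate hyperplanes are null -/

lemma volume_coord_zero (i : Fin 3) : volume {x : E3 | x i = 0} = 0 := by
  have hmp := EuclideanSpace.volume_preserving_symm_measurableEquiv_toLp (Fin 3)
  have hms : MeasurableSet {y : Fin 3 → ℝ | y i = 0} :=
    measurableSet_eq_fun (measurable_pi_apply i) measurable_const
  have h := hmp.measure_preimage hms.nullMeasurableSet
  have hset : (MeasurableEquiv.toLp 2 (Fin 3 → ℝ)).symm ⁻¹' {y : Fin 3 → ℝ | y i = 0}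
      = {x : E3 | x i = 0} := rfl
  rw [hset] at h
  rw [h, MeasureTheory.volume_pi]
  exact MeasureTheory.Measure.pi_hyperplane _ _ 0

lemma ae_coords : ∀ᵐ x : E3, x 0 ≠ 0 ∧ x 1 ≠ 0 ∧ x 2 ≠ 0 := by
  have h : ∀ i : Fin 3, ∀ᵐ x : E3, x i ≠ 0 := by
    intro i
    rw [ae_iff]
    have hs : {x : E3 | ¬ x i ≠ 0} = {x : E3 | x i = 0} := by simp
    rw [hs]
    exact volume_coord_zero i
  exact (h 0).and ((h 1).and (h 2))
/-! #### rpow algebra helper -/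

lemma sq_rpow {σ : ℝ} (hσ : 0 ≤ σ) (c : ℝ) : (σ ^ c) ^ 2 = (σ ^ 2) ^ c := by
  rw [← Real.rpow_natCast (σ ^ c) 2, ← Real.rpow_mul hσ, mul_comm,
    Real.rpow_mul hσ, Real.rpow_natCast]

lemma measurableSet_Omg (ρ₀ : ℝ) : MeasurableSet (Omg ρ₀) := by
  have hc : Continuous cylRho := by
    have h : cylRho = fun x : E3 =>
        Real.sqrt ((EuclideanSpace.proj (0 : Fin 3)) x ^ 2 + (EuclideanSpace.proj (1 : Fin 3)) x ^ 2) := rfl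
    rw [h]
    exact Real.continuous_sqrt.comp
      (((EuclideanSpace.proj (0 : Fin 3)).continuous.pow 2).add
        ((EuclideanSpace.proj (1 : Fin 3)).continuous.pow 2))
  exact (isOpen_lt continuous_const hc).measurableSet

/-- Constant in the bound for the `v̄` part. -/
def KVc (β : ℝ) : ℝ := 2 * (2 : ℝ) ^ (1 - β) + 5

/-- Constant in the bound for the `λ̄'`, `Ȳ` parts. -/
def KMc (ρ₀ : ℝ) : ℝ := (1 + (ρ₀ ^ 2)⁻¹) + (1 + (ρ₀ ^ 2)⁻¹) ^ 2

lemma KVc_nonneg (β : ℝ) : 0 ≤ KVc β := by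
  have h2p : (0 : ℝ) ≤ (2 : ℝ) ^ (1 - β) := Real.rpow_nonneg (by norm_num) _
  simp only [KVc]; linarith

lemma KMc_nonneg (ρ₀ : ℝ) : 0 ≤ KMc ρ₀ := by simp only [KMc]; positivity

/-! #### Pointwise domination: tail estimate -/

set_option maxHeartbeats 1600000 in
lemma gdom_tail {β : ℝ} (hβ : β < -1) (x : E3)
    (h0 : x 0 ≠ 0) (h1 : x 1 ≠ 0) (h2 : x 2 ≠ 0) :
    (sigmaW x ^ 2) ^ β * (1 + cylRho x ^ 2)⁻¹ ≤ Gdom β x := by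
  have hx0 : 0 < x 0 ^ 2 := lt_of_le_of_ne (sq_nonneg _) (Ne.symm (pow_ne_zero 2 h0))
  have hx1 : 0 < x 1 ^ 2 := lt_of_le_of_ne (sq_nonneg _) (Ne.symm (pow_ne_zero 2 h1))
  have hx2 : 0 < x 2 ^ 2 := lt_of_le_of_ne (sq_nonneg _) (Ne.symm (pow_ne_zero 2 h2))
  have hGexp : gfun (β/4 - 3/8) (x 0) * gfun (β/4 - 3/8) (x 1) * gfun (β/2 - 1/4) (x 2)
      = Gdom β x := rfl
  set e1 : ℝ := β/4 - 3/8 with he1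
  set e2 : ℝ := β/2 - 1/4 with he2
  set S : ℝ := sigmaW x ^ 2 with hS
  set A : ℝ := 1 + x 2 ^ 2 with hA
  set B : ℝ := 1 + cylRho x ^ 2 with hB
  have hSval : S = x 0 ^ 2 + x 1 ^ 2 + x 2 ^ 2 + 1 := by
    rw [hS, sigmaW_sq, norm_sq_eq3]
  have hBval : B = 1 + (x 0 ^ 2 + x 1 ^ 2) := by rw [hB, cylRho_sq]
  have hApos : 0 < A := by rw [hA]; positivity
  have hBpos : 0 < B := by rw [hBval]; positivity
  have hSpos : 0 < S := by rw [hSval]; positivity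
  have hAS : A ≤ S := by rw [hSval, hA]; nlinarith
  have hBS : B ≤ S := by rw [hSval, hBval]; nlinarith
  have he2n : e2 ≤ 0 := by rw [he2]; linarith
  have hbe2 : β - e2 ≤ 0 := by rw [he2]; linarith
  have he1n : e1 ≤ 0 := by rw [he1]; linarith
  have step1 : S ^ β = S ^ e2 * S ^ (β - e2) := by
    rw [← Real.rpow_add hSpos, show e2 + (β - e2) = β by ring]
  have step2 : S ^ e2 ≤ A ^ e2 := Real.rpow_le_rpow_of_nonpos hApos hAS he2n
  have step3 : S ^ (β - e2) ≤ B ^ (β - e2) := Real.rpow_le_rpow_of_nonpos hBpos hBS hbe2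
  have step4 : B ^ (β - e2) * B⁻¹ = B ^ (2 * e1) := by
    rw [← Real.rpow_neg_one B, ← Real.rpow_add hBpos]
    congr 1
    rw [he1, he2]; ring
  have step5 : B ^ (2 * e1) ≤ (1 + x 0 ^ 2) ^ e1 * (1 + x 1 ^ 2) ^ e1 := by
    have hbase : (1 + x 0 ^ 2) * (1 + x 1 ^ 2) ≤ B ^ 2 := by
      rw [hBval]; nlinarith [sq_nonneg (x 0 ^ 2 + x 1 ^ 2)]
    have hbpos : 0 < (1 + x 0 ^ 2) * (1 + x 1 ^ 2) := by positivity
    calc B ^ (2 * e1) = (B ^ 2) ^ e1 := by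
          rw [Real.rpow_mul hBpos.le, Real.rpow_two]
      _ ≤ ((1 + x 0 ^ 2) * (1 + x 1 ^ 2)) ^ e1 :=
          Real.rpow_le_rpow_of_nonpos hbpos hbase he1n
      _ = (1 + x 0 ^ 2) ^ e1 * (1 + x 1 ^ 2) ^ e1 :=
          Real.mul_rpow (by positivity) (by positivity)
  have hmins : (1 + x 0 ^ 2) ^ e1 * (1 + x 1 ^ 2) ^ e1 * A ^ e2 ≤ Gdom β x := by
    have f0 : (1 : ℝ) ≤ min 1 (x 0 ^ 2) ^ (-(1 : ℝ)/3) :=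
      Real.one_le_rpow_of_pos_of_le_one_of_nonpos (lt_min one_pos hx0) (min_le_left _ _)
        (by norm_num)
    have f1 : (1 : ℝ) ≤ min 1 (x 1 ^ 2) ^ (-(1 : ℝ)/3) :=
      Real.one_le_rpow_of_pos_of_le_one_of_nonpos (lt_min one_pos hx1) (min_le_left _ _)
        (by norm_num)
    have f2 : (1 : ℝ) ≤ min 1 (x 2 ^ 2) ^ (-(1 : ℝ)/3) :=
      Real.one_le_rpow_of_pos_of_le_one_of_nonpos (lt_min one_pos hx2) (min_le_left _ _)
        (by norm_num)
    have hGval : Gdom β x =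
        (min 1 (x 0 ^ 2) ^ (-(1 : ℝ)/3) * min 1 (x 1 ^ 2) ^ (-(1 : ℝ)/3)
            * min 1 (x 2 ^ 2) ^ (-(1 : ℝ)/3)) *
          ((1 + x 0 ^ 2) ^ e1 * (1 + x 1 ^ 2) ^ e1 * A ^ e2) := by
      rw [← hGexp]
      simp only [gfun, hA]
      ring
    rw [hGval]
    have hP : 0 ≤ (1 + x 0 ^ 2) ^ e1 * (1 + x 1 ^ 2) ^ e1 * A ^ e2 := by positivity
    exact le_mul_of_one_le_left hP
      (one_le_mul_of_one_le_of_one_le (one_le_mul_of_one_le_of_one_le f0 f1) f2)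
  calc S ^ β * B⁻¹ = (S ^ e2 * S ^ (β - e2)) * B⁻¹ := by rw [← step1]
    _ ≤ (A ^ e2 * B ^ (β - e2)) * B⁻¹ := by
        apply mul_le_mul_of_nonneg_right _ (inv_nonneg.mpr hBpos.le)
        exact mul_le_mul step2 step3 (Real.rpow_nonneg hSpos.le _) (Real.rpow_nonneg hApos.le _)
    _ = A ^ e2 * (B ^ (β - e2) * B⁻¹) := by ring
    _ = A ^ e2 * B ^ (2 * e1) := by rw [step4]
    _ ≤ A ^ e2 * ((1 + x 0 ^ 2) ^ e1 * (1 + x 1 ^ 2) ^ e1) :=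
        mul_le_mul_of_nonneg_left step5 (Real.rpow_nonneg hApos.le _)
    _ = (1 + x 0 ^ 2) ^ e1 * (1 + x 1 ^ 2) ^ e1 * A ^ e2 := by ring
    _ ≤ Gdom β x := hmins
/-! #### Pointwise domination: near estimate -/

set_option maxHeartbeats 1600000 in
lemma gdom_near {β : ℝ} (hβ : β < -1) (x : E3)
    (h0 : x 0 ≠ 0) (h1 : x 1 ≠ 0) (h2 : x 2 ≠ 0) (hr : ‖x‖ ≤ 1) :
    (‖x‖ ^ 2)⁻¹ ≤ (2 : ℝ) ^ (1 - β) * Gdom β x := by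
  have hxne : x ≠ 0 := fun hx => h0 (by rw [hx]; rfl)
  have hrpos : 0 < ‖x‖ := norm_pos_iff.mpr hxne
  have hr2pos : 0 < ‖x‖ ^ 2 := by positivity
  have hc0 : x 0 ^ 2 ≤ ‖x‖ ^ 2 := by rw [norm_sq_eq3]; nlinarith [sq_nonneg (x 1), sq_nonneg (x 2)]
  have hc1 : x 1 ^ 2 ≤ ‖x‖ ^ 2 := by rw [norm_sq_eq3]; nlinarith [sq_nonneg (x 0), sq_nonneg (x 2)]
  have hc2 : x 2 ^ 2 ≤ ‖x‖ ^ 2 := by rw [norm_sq_eq3]; nlinarith [sq_nonneg (x 0), sq_nonneg (x 1)]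
  have hGexp : gfun (β/4 - 3/8) (x 0) * gfun (β/4 - 3/8) (x 1) * gfun (β/2 - 1/4) (x 2)
      = Gdom β x := rfl
  set e1 : ℝ := β/4 - 3/8 with he1
  set e2 : ℝ := β/2 - 1/4 with he2
  have he1n : e1 ≤ 0 := by rw [he1]; linarith
  have he2n : e2 ≤ 0 := by rw [he2]; linarith
  have key : ∀ (t e : ℝ), t ≠ 0 → t ^ 2 ≤ ‖x‖ ^ 2 → e ≤ 0 →
      (‖x‖ ^ 2) ^ (-(1 : ℝ)/3) * (2 : ℝ) ^ e ≤ gfun e t := by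
    intro t e ht ht2 he
    have htpos : 0 < t ^ 2 := lt_of_le_of_ne (sq_nonneg t) (Ne.symm (pow_ne_zero 2 ht))
    have hminpos : 0 < min 1 (t ^ 2) := lt_min one_pos htpos
    have hminle : min 1 (t ^ 2) ≤ ‖x‖ ^ 2 := le_trans (min_le_right _ _) ht2
    have hf1 : (‖x‖ ^ 2) ^ (-(1 : ℝ)/3) ≤ min 1 (t ^ 2) ^ (-(1 : ℝ)/3) :=
      Real.rpow_le_rpow_of_nonpos hminpos hminle (by norm_num)
    have hf2 : (2 : ℝ) ^ e ≤ (1 + t ^ 2) ^ e := by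
      refine Real.rpow_le_rpow_of_nonpos (by positivity) ?_ he
      have : t ^ 2 ≤ 1 := le_trans ht2 (by nlinarith [norm_nonneg x, hr])
      linarith
    exact mul_le_mul hf1 hf2 (Real.rpow_nonneg (by norm_num) _)
      (Real.rpow_nonneg hminpos.le _)
  have k0 := key (x 0) e1 h0 hc0 he1n
  have k1 := key (x 1) e1 h1 hc1 he1n
  have k2 := key (x 2) e2 h2 hc2 he2n
  have hprod : ((‖x‖ ^ 2) ^ (-(1 : ℝ)/3) * (2 : ℝ) ^ e1) *
      ((‖x‖ ^ 2) ^ (-(1 : ℝ)/3) * (2 : ℝ) ^ e1) *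
      ((‖x‖ ^ 2) ^ (-(1 : ℝ)/3) * (2 : ℝ) ^ e2) ≤ Gdom β x := by
    have h01 := mul_le_mul k0 k1 (by positivity) (gfun_nonneg _ _)
    have h012 := mul_le_mul h01 k2 (by positivity)
      (mul_nonneg (gfun_nonneg _ _) (gfun_nonneg _ _))
    exact le_of_le_of_eq h012 hGexp
  have hcube : ((‖x‖ ^ 2) ^ (-(1 : ℝ)/3)) ^ (3 : ℕ) = (‖x‖ ^ 2)⁻¹ := by
    rw [← Real.rpow_natCast ((‖x‖ ^ 2) ^ (-(1 : ℝ)/3)) 3, ← Real.rpow_mul (sq_nonneg ‖x‖),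
      show (-(1 : ℝ)/3 * ((3 : ℕ) : ℝ)) = -1 by norm_num, Real.rpow_neg_one]
  have htwo : (2 : ℝ) ^ e1 * (2 : ℝ) ^ e1 * (2 : ℝ) ^ e2 = (2 : ℝ) ^ (β - 1) := by
    rw [← Real.rpow_add two_pos, ← Real.rpow_add two_pos]
    congr 1
    rw [he1, he2]; ring
  calc (‖x‖ ^ 2)⁻¹ = (2 : ℝ) ^ (1 - β) * ((2 : ℝ) ^ (β - 1) * (‖x‖ ^ 2)⁻¹) := by
        rw [← mul_assoc, ← Real.rpow_add two_pos, show (1 - β) + (β - 1) = 0 by ring,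
          Real.rpow_zero, one_mul]
    _ ≤ (2 : ℝ) ^ (1 - β) * Gdom β x := by
        apply mul_le_mul_of_nonneg_left _ (Real.rpow_nonneg (by norm_num) _)
        calc (2 : ℝ) ^ (β - 1) * (‖x‖ ^ 2)⁻¹
            = ((‖x‖ ^ 2) ^ (-(1 : ℝ)/3) * (2 : ℝ) ^ e1) *
              ((‖x‖ ^ 2) ^ (-(1 : ℝ)/3) * (2 : ℝ) ^ e1) *
              ((‖x‖ ^ 2) ^ (-(1 : ℝ)/3) * (2 : ℝ) ^ e2) := by
              rw [show ((‖x‖ ^ 2) ^ (-(1 : ℝ)/3) * (2 : ℝ) ^ e1) *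
                  ((‖x‖ ^ 2) ^ (-(1 : ℝ)/3) * (2 : ℝ) ^ e1) *
                  ((‖x‖ ^ 2) ^ (-(1 : ℝ)/3) * (2 : ℝ) ^ e2)
                = ((‖x‖ ^ 2) ^ (-(1 : ℝ)/3)) ^ (3 : ℕ) *
                  ((2 : ℝ) ^ e1 * (2 : ℝ) ^ e1 * (2 : ℝ) ^ e2) by ring,
                hcube, htwo]
              ring
          _ ≤ Gdom β x := hprod
/-! #### Master pointwise bounds -/

set_option maxHeartbeats 1600000 in
lemma master_v {β : ℝ} (hβ : β < -1) (x : E3)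
    (h0 : x 0 ≠ 0) (h1 : x 1 ≠ 0) (h2 : x 2 ≠ 0)
    {N v g : ℝ} (hN : 0 ≤ N) (hg0 : 0 ≤ g)
    (hg : g ≤ sigmaW x ^ (β - 1) * N) (hv1 : |v| ≤ sigmaW x ^ β * N) (hv2 : |v| ≤ N * ‖x‖) :
    g ^ 2 / ‖x‖ ^ 2 + v ^ 2 / ‖x‖ ^ 4 ≤ N ^ 2 * KVc β * Gdom β x := by
  have hxne : x ≠ 0 := fun hx => h0 (by rw [hx]; rfl)
  have hrpos : 0 < ‖x‖ := norm_pos_iff.mpr hxne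
  have hr2 : 0 < ‖x‖ ^ 2 := by positivity
  have hσpos := sigmaW_pos x
  have hσ1 := one_le_sigmaW x
  have hGd := Gdom_nonneg β x
  have h2p : (0 : ℝ) ≤ (2 : ℝ) ^ (1 - β) := Real.rpow_nonneg (by norm_num) _
  have hKV5 : (5 : ℝ) ≤ KVc β := by simp only [KVc]; linarith
  have hv2sq : v ^ 2 ≤ N ^ 2 * ‖x‖ ^ 2 := by
    nlinarith [hv2, abs_nonneg v, sq_abs v, norm_nonneg x, hN]
  rcases le_or_gt ‖x‖ 1 with hle | hgt
  · -- near the origin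
    have hσb : sigmaW x ^ (β - 1) ≤ 1 :=
      Real.rpow_le_one_of_one_le_of_nonpos hσ1 (by linarith)
    have hgN : g ≤ N := le_trans hg
      (by nlinarith [hσb, hN, Real.rpow_nonneg (sigmaW_pos x).le (β - 1)])
    have ht1 : g ^ 2 / ‖x‖ ^ 2 ≤ N ^ 2 * (‖x‖ ^ 2)⁻¹ := by
      rw [div_eq_mul_inv]
      exact mul_le_mul_of_nonneg_right (by nlinarith [hgN, hg0]) (by positivity)
    have ht2 : v ^ 2 / ‖x‖ ^ 4 ≤ N ^ 2 * (‖x‖ ^ 2)⁻¹ := by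
      rw [div_le_iff₀ (by positivity)]
      have hne : (‖x‖ : ℝ) ≠ 0 := ne_of_gt hrpos
      have heq : N ^ 2 * (‖x‖ ^ 2)⁻¹ * ‖x‖ ^ 4 = N ^ 2 * ‖x‖ ^ 2 := by
        field_simp
      rw [heq]
      exact hv2sq
    have hnear := gdom_near hβ x h0 h1 h2 hle
    calc g ^ 2 / ‖x‖ ^ 2 + v ^ 2 / ‖x‖ ^ 4 ≤ 2 * N ^ 2 * (‖x‖ ^ 2)⁻¹ := by linarith
      _ ≤ 2 * N ^ 2 * ((2 : ℝ) ^ (1 - β) * Gdom β x) :=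
          mul_le_mul_of_nonneg_left hnear (by positivity)
      _ = N ^ 2 * (2 * (2 : ℝ) ^ (1 - β)) * Gdom β x := by ring
      _ ≤ N ^ 2 * KVc β * Gdom β x := by
          have hh := mul_le_mul_of_nonneg_right
            (show 2 * (2 : ℝ) ^ (1 - β) ≤ KVc β by simp only [KVc]; linarith)
            (mul_nonneg (sq_nonneg N) hGd)
          nlinarith [hh]
  · -- away from the origin
    set S : ℝ := sigmaW x ^ 2 with hSdef
    have hS1 : 1 ≤ S := one_le_sigmaW_sq x
    have hSpos : 0 < S := by linarith
    have hr21 : 1 ≤ ‖x‖ ^ 2 := by nlinarith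
    have hS2r : S ≤ 2 * ‖x‖ ^ 2 := by rw [hSdef, sigmaW_sq]; linarith
    have hgsq : g ^ 2 ≤ N ^ 2 * S ^ (β - 1) := by
      have h := pow_le_pow_left₀ hg0 hg 2
      rw [mul_pow, sq_rpow hσpos.le, ← hSdef] at h
      linarith [h]
    have ht1 : g ^ 2 / ‖x‖ ^ 2 ≤ N ^ 2 * S ^ (β - 1) :=
      le_trans (div_le_self (by positivity) hr21) hgsq
    have hvsq : v ^ 2 ≤ N ^ 2 * S ^ β := by
      have h := pow_le_pow_left₀ (abs_nonneg v) hv1 2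
      rw [mul_pow, sq_rpow hσpos.le, sq_abs, ← hSdef] at h
      linarith [h]
    have hS24 : S ^ 2 ≤ 4 * ‖x‖ ^ 4 := by
      calc S ^ 2 ≤ (2 * ‖x‖ ^ 2) ^ 2 := pow_le_pow_left₀ hSpos.le hS2r 2
        _ = 4 * ‖x‖ ^ 4 := by ring
    have hinv4 : (‖x‖ ^ 4)⁻¹ ≤ 4 * (S ^ 2)⁻¹ := by
      rw [show (4 : ℝ) * (S ^ 2)⁻¹ = (S ^ 2 / 4)⁻¹ by rw [inv_div]; ring]
      exact inv_anti₀ (by positivity) (by linarith)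
    have ht2 : v ^ 2 / ‖x‖ ^ 4 ≤ 4 * N ^ 2 * S ^ (β - 2) := by
      rw [div_eq_mul_inv]
      calc v ^ 2 * (‖x‖ ^ 4)⁻¹ ≤ (N ^ 2 * S ^ β) * (4 * (S ^ 2)⁻¹) :=
            mul_le_mul hvsq hinv4 (by positivity) (by positivity)
        _ = 4 * N ^ 2 * (S ^ β * (S ^ 2)⁻¹) := by ring
        _ = 4 * N ^ 2 * S ^ (β - 2) := by
            rw [show ((S : ℝ) ^ 2)⁻¹ = S ^ (-2 : ℝ) by
                rw [Real.rpow_neg hSpos.le, Real.rpow_two],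
              ← Real.rpow_add hSpos, show β + (-2 : ℝ) = β - 2 by ring]
    have hSm : S ^ (β - 2) ≤ S ^ (β - 1) :=
      Real.rpow_le_rpow_of_exponent_le hS1 (by linarith)
    set B : ℝ := 1 + cylRho x ^ 2 with hBdef
    have hBpos : 0 < B := by rw [hBdef]; positivity
    have hBS : B ≤ S := by
      rw [hBdef, hSdef, sigmaW_sq, cylRho_sq, norm_sq_eq3]
      nlinarith [sq_nonneg (x 2)]
    have hSB' : S ^ (β - 1) ≤ S ^ β * B⁻¹ := by
      rw [show S ^ (β - 1) = S ^ β * S⁻¹ by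
        rw [← Real.rpow_neg_one S, ← Real.rpow_add hSpos, sub_eq_add_neg]]
      exact mul_le_mul_of_nonneg_left (inv_anti₀ hBpos hBS) (by positivity)
    have htail := gdom_tail hβ x h0 h1 h2
    rw [← hSdef, ← hBdef] at htail
    have hcomb : g ^ 2 / ‖x‖ ^ 2 + v ^ 2 / ‖x‖ ^ 4 ≤ 5 * N ^ 2 * S ^ (β - 1) := by
      have h4 := mul_le_mul_of_nonneg_left hSm (show (0:ℝ) ≤ 4 * N ^ 2 by positivity)
      linarith
    calc g ^ 2 / ‖x‖ ^ 2 + v ^ 2 / ‖x‖ ^ 4 ≤ 5 * N ^ 2 * S ^ (β - 1) := hcomb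
      _ ≤ 5 * N ^ 2 * (S ^ β * B⁻¹) := mul_le_mul_of_nonneg_left hSB' (by positivity)
      _ ≤ 5 * N ^ 2 * Gdom β x := mul_le_mul_of_nonneg_left htail (by positivity)
      _ ≤ N ^ 2 * KVc β * Gdom β x := by
          have hh := mul_le_mul_of_nonneg_right hKV5 (mul_nonneg (sq_nonneg N) hGd)
          nlinarith [hh]

set_option maxHeartbeats 1600000 in
lemma master_tail {β ρ₀ : ℝ} (hβ : β < -1) (hρ₀ : 0 < ρ₀) (x : E3)
    (h0 : x 0 ≠ 0) (h1 : x 1 ≠ 0) (h2 : x 2 ≠ 0) (hx : ρ₀ < cylRho x)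
    {N q1 q2 : ℝ} (hN : 0 ≤ N) (hq10 : 0 ≤ q1) (hq20 : 0 ≤ q2)
    (hq1 : q1 ≤ N ^ 2 * (sigmaW x ^ 2) ^ (β - 1)) (hq2 : q2 ≤ N ^ 2 * (sigmaW x ^ 2) ^ β) :
    q1 / cylRho x ^ 2 + q2 / cylRho x ^ 4 ≤ N ^ 2 * KMc ρ₀ * Gdom β x := by
  set S : ℝ := sigmaW x ^ 2 with hSdef
  set B : ℝ := 1 + cylRho x ^ 2 with hBdef
  have hρ : 0 < cylRho x := lt_trans hρ₀ hx
  have hS1 : 1 ≤ S := one_le_sigmaW_sq x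
  have hSpos : 0 < S := by linarith
  have hBpos : 0 < B := by rw [hBdef]; positivity
  have hB1 : 1 ≤ B := by rw [hBdef]; nlinarith
  have hk : 0 ≤ (ρ₀ ^ 2)⁻¹ := by positivity
  have h2ρ : ρ₀ ^ 2 ≤ cylRho x ^ 2 := by nlinarith
  have hmul1 : (ρ₀ ^ 2)⁻¹ * ρ₀ ^ 2 = 1 := inv_mul_cancel₀ (by positivity)
  have hinv2 : (cylRho x ^ 2)⁻¹ ≤ (1 + (ρ₀ ^ 2)⁻¹) * B⁻¹ := by
    rw [inv_eq_one_div, show (1 + (ρ₀ ^ 2)⁻¹) * B⁻¹ = (1 + (ρ₀ ^ 2)⁻¹) / B by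
      rw [div_eq_mul_inv], div_le_div_iff₀ (by positivity) hBpos]
    have hkk := mul_le_mul_of_nonneg_left h2ρ hk
    rw [hBdef]
    nlinarith [hkk]
  have hinv4 : (cylRho x ^ 4)⁻¹ ≤ (1 + (ρ₀ ^ 2)⁻¹) ^ 2 * B⁻¹ := by
    have e4 : (cylRho x ^ 4)⁻¹ = ((cylRho x ^ 2)⁻¹) ^ 2 := by
      rw [inv_pow, show (cylRho x ^ 2) ^ 2 = cylRho x ^ 4 by ring]
    rw [e4]
    have hBinv1 : B⁻¹ ≤ 1 := by
      have h := inv_anti₀ one_pos hB1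
      simpa using h
    calc ((cylRho x ^ 2)⁻¹) ^ 2 ≤ ((1 + (ρ₀ ^ 2)⁻¹) * B⁻¹) ^ 2 :=
          pow_le_pow_left₀ (by positivity) hinv2 2
      _ = (1 + (ρ₀ ^ 2)⁻¹) ^ 2 * (B⁻¹ * B⁻¹) := by ring
      _ ≤ (1 + (ρ₀ ^ 2)⁻¹) ^ 2 * (1 * B⁻¹) := by
          apply mul_le_mul_of_nonneg_left _ (by positivity)
          exact mul_le_mul_of_nonneg_right hBinv1 (by positivity)
      _ = (1 + (ρ₀ ^ 2)⁻¹) ^ 2 * B⁻¹ := by ring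
  have hSm : S ^ (β - 1) ≤ S ^ β := Real.rpow_le_rpow_of_exponent_le hS1 (by linarith)
  have ht1 : q1 / cylRho x ^ 2 ≤ (N ^ 2 * S ^ β) * ((1 + (ρ₀ ^ 2)⁻¹) * B⁻¹) := by
    rw [div_eq_mul_inv]
    refine mul_le_mul ?_ hinv2 (by positivity) (by positivity)
    exact le_trans hq1 (mul_le_mul_of_nonneg_left hSm (sq_nonneg N))
  have ht2 : q2 / cylRho x ^ 4 ≤ (N ^ 2 * S ^ β) * ((1 + (ρ₀ ^ 2)⁻¹) ^ 2 * B⁻¹) := by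
    rw [div_eq_mul_inv]
    exact mul_le_mul hq2 hinv4 (by positivity) (by positivity)
  have htail := gdom_tail hβ x h0 h1 h2
  rw [← hSdef, ← hBdef] at htail
  calc q1 / cylRho x ^ 2 + q2 / cylRho x ^ 4
      ≤ (N ^ 2 * S ^ β) * ((1 + (ρ₀ ^ 2)⁻¹) * B⁻¹) +
        (N ^ 2 * S ^ β) * ((1 + (ρ₀ ^ 2)⁻¹) ^ 2 * B⁻¹) := add_le_add ht1 ht2
    _ = N ^ 2 * KMc ρ₀ * (S ^ β * B⁻¹) := by simp only [KMc]; ring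
    _ ≤ N ^ 2 * KMc ρ₀ * Gdom β x :=
        mul_le_mul_of_nonneg_left htail (mul_nonneg (sq_nonneg N) (KMc_nonneg ρ₀))
/-! #### Integral bound over `Ω` -/

set_option maxHeartbeats 1600000 in
lemma tail_integral_bound {β ρ₀ : ℝ} (hβ : β < -1) (hρ₀ : 0 < ρ₀)
    (q1 q2 : E3 → ℝ) {N : ℝ} (hN : 0 ≤ N)
    (hq10 : ∀ x, 0 ≤ q1 x) (hq20 : ∀ x, 0 ≤ q2 x)
    (hq1 : ∀ x ∈ Omg ρ₀, q1 x ≤ N ^ 2 * (sigmaW x ^ 2) ^ (β - 1))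
    (hq2 : ∀ x ∈ Omg ρ₀, q2 x ≤ N ^ 2 * (sigmaW x ^ 2) ^ β) :
    (∫ x in Omg ρ₀, (q1 x / cylRho x ^ 2 + q2 x / cylRho x ^ 4)) ≤
      N ^ 2 * (KMc ρ₀ * ∫ x : E3, Gdom β x) := by
  have hGint := Gdom_integrable hβ
  have hIG0 : 0 ≤ ∫ x : E3, Gdom β x := integral_nonneg (Gdom_nonneg β)
  have hKM := KMc_nonneg ρ₀
  by_cases hint : IntegrableOn (fun x => q1 x / cylRho x ^ 2 + q2 x / cylRho x ^ 4) (Omg ρ₀)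
  · have hOm : MeasurableSet (Omg ρ₀) := measurableSet_Omg ρ₀
    have hae : (fun x => q1 x / cylRho x ^ 2 + q2 x / cylRho x ^ 4)
        ≤ᵐ[volume.restrict (Omg ρ₀)] fun x => N ^ 2 * KMc ρ₀ * Gdom β x := by
      filter_upwards [ae_restrict_of_ae ae_coords, ae_restrict_mem hOm] with x hx hmem
      exact master_tail hβ hρ₀ x hx.1 hx.2.1 hx.2.2 hmem hN (hq10 x) (hq20 x)
        (hq1 x hmem) (hq2 x hmem)
    calc (∫ x in Omg ρ₀, (q1 x / cylRho x ^ 2 + q2 x / cylRho x ^ 4))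
        ≤ ∫ x in Omg ρ₀, N ^ 2 * KMc ρ₀ * Gdom β x :=
          integral_mono_ae hint ((hGint.const_mul _).restrict) hae
      _ = N ^ 2 * KMc ρ₀ * ∫ x in Omg ρ₀, Gdom β x := integral_const_mul _ _
      _ ≤ N ^ 2 * KMc ρ₀ * ∫ x : E3, Gdom β x := by
          apply mul_le_mul_of_nonneg_left _ (mul_nonneg (sq_nonneg N) hKM)
          exact setIntegral_le_integral hGint (Filter.Eventually.of_forall (Gdom_nonneg β))
      _ = N ^ 2 * (KMc ρ₀ * ∫ x : E3, Gdom β x) := by ring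
  · rw [integral_undef hint]
    exact mul_nonneg (sq_nonneg N) (mul_nonneg hKM hIG0)

end Embedding
set_option maxHeartbeats 1600000 in
/-- the continuous embedding B ⊂ H: for every β < −1 and ρ₀ > 0
there is c > 0 (depending only on β, ρ₀) with ‖φ‖_H ≤ c ‖φ‖_B for every
perturbation φ with finite B-norm. -/
theorem B_embeds_in_H (β ρ₀ : ℝ) (hβ : β < -1) (hρ₀ : 0 < ρ₀) :
    ∃ c > 0, ∀ L0 : E3 → Mat2, (∀ x, (L0 x).IsSymm) → (∀ x, (L0 x).PosDef) →
      ∀ φ : Data, SmoothData φ → AxisymData φ →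
        (∀ x, cylRho x ≤ ρ₀ → φ.L x = 0 ∧ φ.Y x = 0) →
        FiniteB β ρ₀ L0 φ →
        Real.sqrt (HNormSq ρ₀ L0 φ) ≤ c * BNorm β ρ₀ L0 φ := by
  have hGint := Gdom_integrable hβ
  set IG : ℝ := ∫ x : E3, Gdom β x with hIGdef
  have hIG0 : 0 ≤ IG := integral_nonneg (Gdom_nonneg β)
  have hKV := KVc_nonneg β
  have hKM := KMc_nonneg ρ₀
  set D : ℝ := KVc β * IG + KMc ρ₀ * IG + KMc ρ₀ * IG + 1 with hDdef
  have hD1 : 1 ≤ D := by nlinarith [mul_nonneg hKV hIG0, mul_nonneg hKM hIG0]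
  refine ⟨Real.sqrt D, Real.sqrt_pos.mpr (by linarith), ?_⟩
  intro L0 hsymm hpd φ hsm hax hvan hFin
  obtain ⟨hfin1, hfin2, hfin3⟩ := hFin
  set B1 : ℝ := c1Norm β Set.univ (fun x => |φ.v x|) (fun x => ‖grad φ.v x‖) with hB1def
  set B2 : ℝ := c1Norm β (Omg ρ₀) (fun x => Real.sqrt (matAbsSq (φ.L x)))
      (fun x => Real.sqrt (gradMatAbsSq φ.L x)) with hB2def
  set B3 : ℝ := c1Norm β (Omg ρ₀) (fun x => Real.sqrt (vecQuad (L0 x)⁻¹ (φ.Y x) (φ.Y x)))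
      (fun x => Real.sqrt (quadG (L0 x)⁻¹ φ.Y φ.Y x)) with hB3def
  have hB1n : 0 ≤ B1 := c1Norm_nonneg (fun _ => abs_nonneg _) (fun _ => norm_nonneg _)
  have hB2n : 0 ≤ B2 := c1Norm_nonneg (fun _ => Real.sqrt_nonneg _) (fun _ => Real.sqrt_nonneg _)
  have hB3n : 0 ≤ B3 := c1Norm_nonneg (fun _ => Real.sqrt_nonneg _) (fun _ => Real.sqrt_nonneg _)
  -- the `v̄` integral
  have hI1 : (∫ x : E3, (‖grad φ.v x‖ ^ 2 / ‖x‖ ^ 2 + φ.v x ^ 2 / ‖x‖ ^ 4))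
      ≤ B1 ^ 2 * (KVc β * IG) := by
    have hbm : ∀ x : E3, |φ.v x| ≤ sigmaW x ^ β * B1 := fun x =>
      c1_bound_m hfin1 (abs_nonneg _) (norm_nonneg _) (Set.mem_univ x)
    have hbd : ∀ x : E3, ‖grad φ.v x‖ ≤ sigmaW x ^ (β - 1) * B1 := fun x =>
      c1_bound_dm hfin1 (abs_nonneg _) (norm_nonneg _) (Set.mem_univ x)
    by_cases hint : Integrable (fun x : E3 => ‖grad φ.v x‖ ^ 2 / ‖x‖ ^ 2 + φ.v x ^ 2 / ‖x‖ ^ 4)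
    · by_cases hv0 : φ.v 0 = 0
      · have hgradle : ∀ y : E3, ‖fderiv ℝ φ.v y‖ ≤ B1 := by
          intro y
          rw [← norm_grad]
          refine le_trans (hbd y) ?_
          have hσb : sigmaW y ^ (β - 1) ≤ 1 :=
            Real.rpow_le_one_of_one_le_of_nonpos (one_le_sigmaW y) (by linarith)
          nlinarith [Real.rpow_nonneg (sigmaW_pos y).le (β - 1)]
        have hdiff : Differentiable ℝ φ.v := hsm.1.differentiable (by simp)
        have hmvt : ∀ y : E3, |φ.v y| ≤ B1 * ‖y‖ := by
          intro y
          have h := Convex.norm_image_sub_le_of_norm_fderiv_le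
            (fun z _ => (hdiff z)) (fun z _ => hgradle z) convex_univ
            (Set.mem_univ 0) (Set.mem_univ y)
          simpa [hv0, Real.norm_eq_abs] using h
        have hae : (fun x : E3 => ‖grad φ.v x‖ ^ 2 / ‖x‖ ^ 2 + φ.v x ^ 2 / ‖x‖ ^ 4)
            ≤ᵐ[volume] fun x => B1 ^ 2 * KVc β * Gdom β x := by
          filter_upwards [ae_coords] with x hx
          exact master_v hβ x hx.1 hx.2.1 hx.2.2 hB1n (norm_nonneg _) (hbd x) (hbm x) (hmvt x)
        calc (∫ x : E3, (‖grad φ.v x‖ ^ 2 / ‖x‖ ^ 2 + φ.v x ^ 2 / ‖x‖ ^ 4))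
            ≤ ∫ x : E3, B1 ^ 2 * KVc β * Gdom β x :=
              integral_mono_ae hint (hGint.const_mul _) hae
          _ = B1 ^ 2 * KVc β * IG := integral_const_mul _ _
          _ = B1 ^ 2 * (KVc β * IG) := by ring
      · exfalso
        have hf1nn : ∀ y : E3, 0 ≤ ‖grad φ.v y‖ ^ 2 / ‖y‖ ^ 2 + φ.v y ^ 2 / ‖y‖ ^ 4 :=
          fun y => by positivity
        have hM0 : (0:ℝ) ≤ ∫ x : E3, (‖grad φ.v x‖ ^ 2 / ‖x‖ ^ 2 + φ.v x ^ 2 / ‖x‖ ^ 4) :=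
          integral_nonneg hf1nn
        set M : ℝ := ∫ x : E3, (‖grad φ.v x‖ ^ 2 / ‖x‖ ^ 2 + φ.v x ^ 2 / ‖x‖ ^ 4) with hMdef
        set d : ℝ := φ.v 0 with hddef
        have hd2 : 0 < d ^ 2 := lt_of_le_of_ne (sq_nonneg d) (Ne.symm (pow_ne_zero 2 hv0))
        have hcont : ContinuousAt φ.v 0 := (hsm.1.continuous).continuousAt
        have habs : 0 < |d| / 2 := by
          have : 0 < |d| := abs_pos.mpr hv0
          linarith
        have hev : ∀ᶠ y in nhds (0 : E3), dist (φ.v y) d < |d| / 2 :=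
          Metric.tendsto_nhds.mp hcont (|d| / 2) habs
        obtain ⟨δ, hδpos, hδ⟩ := Metric.eventually_nhds_iff_ball.mp hev
        set c₀ : ℝ := (volume (Metric.ball (0 : E3) 1)).toReal with hc₀def
        have hc₀ : 0 < c₀ := ENNReal.toReal_pos
          (Metric.measure_ball_pos volume 0 one_pos).ne' measure_ball_lt_top.ne
        have hM1 : 0 < M + 1 := by linarith
        set δ' : ℝ := min δ (c₀ * d ^ 2 / 4 / (M + 1)) with hδ'def
        have hδ'pos : 0 < δ' := lt_min hδpos (by positivity)
        have hsub : Metric.ball (0 : E3) δ' ⊆ Metric.ball 0 δ :=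
          Metric.ball_subset_ball (min_le_left _ _)
        have hsmeas : MeasurableSet (Metric.ball (0 : E3) δ' \ {0}) :=
          measurableSet_ball.diff (measurableSet_singleton _)
        have hvols : volume (Metric.ball (0 : E3) δ' \ {0})
            = ENNReal.ofReal (δ' ^ 3) * volume (Metric.ball (0 : E3) 1) := by
          rw [measure_diff_null (measure_singleton _), Measure.addHaar_ball _ _ hδ'pos.le,
            finrank_euclideanSpace_fin]
        have hlow : ∀ y ∈ Metric.ball (0 : E3) δ' \ {0},
            d ^ 2 / 4 / δ' ^ 4 ≤ ‖grad φ.v y‖ ^ 2 / ‖y‖ ^ 2 + φ.v y ^ 2 / ‖y‖ ^ 4 := by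
          rintro y ⟨hyb, hy0⟩
          have hyne : y ≠ 0 := by simpa using hy0
          have hyn : 0 < ‖y‖ := norm_pos_iff.mpr hyne
          have hyδ : ‖y‖ < δ' := mem_ball_zero_iff.mp hyb
          have hclose := hδ y (hsub hyb)
          rw [Real.dist_eq] at hclose
          have h1 : |d| - |φ.v y| ≤ |φ.v y - d| := by
            rw [abs_sub_comm]
            exact abs_sub_abs_le_abs_sub d (φ.v y)
          have hvy : |d| / 2 ≤ |φ.v y| := by linarith
          have hv2 : d ^ 2 / 4 ≤ φ.v y ^ 2 := by
            nlinarith [sq_abs d, sq_abs (φ.v y), abs_nonneg d, abs_nonneg (φ.v y)]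
          have hy4 : ‖y‖ ^ 4 ≤ δ' ^ 4 := pow_le_pow_left₀ hyn.le hyδ.le 4
          have hterm : d ^ 2 / 4 / δ' ^ 4 ≤ φ.v y ^ 2 / ‖y‖ ^ 4 :=
            div_le_div₀ (sq_nonneg _) hv2 (by positivity) hy4
          have hpos1 : 0 ≤ ‖grad φ.v y‖ ^ 2 / ‖y‖ ^ 2 := by positivity
          linarith
        have hconst : IntegrableOn (fun _ : E3 => d ^ 2 / 4 / δ' ^ 4)
            (Metric.ball (0 : E3) δ' \ {0}) := by
          refine (integrableOn_const_iff (by simp)).mpr (Or.inr ?_)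
          exact lt_of_le_of_lt (measure_mono Set.diff_subset) measure_ball_lt_top
        have hmono := setIntegral_mono_on hconst hint.integrableOn hsmeas hlow
        rw [setIntegral_const, smul_eq_mul] at hmono
        have htr : (volume (Metric.ball (0 : E3) δ' \ {0})).toReal = δ' ^ 3 * c₀ := by
          rw [hvols, ENNReal.toReal_mul, ENNReal.toReal_ofReal (by positivity), hc₀def]
        rw [measureReal_def, htr] at hmono
        have hup : (∫ x in Metric.ball (0 : E3) δ' \ {0},
            (‖grad φ.v x‖ ^ 2 / ‖x‖ ^ 2 + φ.v x ^ 2 / ‖x‖ ^ 4)) ≤ M := by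
          have h := setIntegral_le_integral (s := Metric.ball (0 : E3) δ' \ {0}) hint
            (Filter.Eventually.of_forall hf1nn)
          rw [← hMdef] at h
          exact h
        have hδne : δ' ≠ 0 := ne_of_gt hδ'pos
        have heq1 : δ' ^ 3 * c₀ * (d ^ 2 / 4 / δ' ^ 4) = c₀ * d ^ 2 / 4 / δ' := by
          field_simp
        have hδ'le : δ' ≤ c₀ * d ^ 2 / 4 / (M + 1) := min_le_right _ _
        have hge : M + 1 ≤ c₀ * d ^ 2 / 4 / δ' := by
          rw [le_div_iff₀ hδ'pos]
          calc (M + 1) * δ' ≤ (M + 1) * (c₀ * d ^ 2 / 4 / (M + 1)) :=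
                mul_le_mul_of_nonneg_left hδ'le (by linarith)
            _ = c₀ * d ^ 2 / 4 := by field_simp
        rw [heq1] at hmono
        linarith [hmono.trans hup]
    · rw [integral_undef hint]
      exact mul_nonneg (sq_nonneg _) (mul_nonneg hKV hIG0)
  -- the `λ̄'` integral
  have hI2 : (∫ x in Omg ρ₀, (gradMatAbsSq φ.L x / cylRho x ^ 2 + matAbsSq (φ.L x) / cylRho x ^ 4))
      ≤ B2 ^ 2 * (KMc ρ₀ * IG) := by
    have hq10 : ∀ x : E3, 0 ≤ gradMatAbsSq φ.L x := fun x => by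
      show 0 ≤ ∑ i, ∑ j, ‖grad (fun y => φ.L y i j) x‖ ^ 2
      exact Finset.sum_nonneg fun i _ => Finset.sum_nonneg fun j _ => sq_nonneg _
    have hq20 : ∀ x : E3, 0 ≤ matAbsSq (φ.L x) := fun x => by
      show 0 ≤ ∑ i, ∑ j, (φ.L x i j) ^ 2
      exact Finset.sum_nonneg fun i _ => Finset.sum_nonneg fun j _ => sq_nonneg _
    refine tail_integral_bound hβ hρ₀ (fun x => gradMatAbsSq φ.L x) (fun x => matAbsSq (φ.L x))
      hB2n hq10 hq20 (fun x hx => ?_) (fun x hx => ?_)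
    · have h := c1_bound_dm hfin2 (Real.sqrt_nonneg _) (Real.sqrt_nonneg _) hx
      have h2 := pow_le_pow_left₀ (Real.sqrt_nonneg _) h 2
      rw [Real.sq_sqrt (hq10 x), mul_pow, sq_rpow (sigmaW_pos x).le] at h2
      linarith [h2]
    · have h := c1_bound_m hfin2 (Real.sqrt_nonneg _) (Real.sqrt_nonneg _) hx
      have h2 := pow_le_pow_left₀ (Real.sqrt_nonneg _) h 2
      rw [Real.sq_sqrt (hq20 x), mul_pow, sq_rpow (sigmaW_pos x).le] at h2
      linarith [h2]
  -- the `Ȳ` integral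
  have hI3 : (∫ x in Omg ρ₀, (quadG (L0 x)⁻¹ φ.Y φ.Y x / cylRho x ^ 2
      + vecQuad (L0 x)⁻¹ (φ.Y x) (φ.Y x) / cylRho x ^ 4)) ≤ B3 ^ 2 * (KMc ρ₀ * IG) := by
    have hpsd : ∀ x, ((L0 x)⁻¹).PosSemidef := fun x => ((hpd x).inv).posSemidef
    refine tail_integral_bound hβ hρ₀ (fun x => quadG (L0 x)⁻¹ φ.Y φ.Y x)
      (fun x => vecQuad (L0 x)⁻¹ (φ.Y x) (φ.Y x)) hB3n
      (fun x => quadG_nonneg (hpsd x) _ _) (fun x => vecQuad_nonneg (hpsd x) _)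
      (fun x hx => ?_) (fun x hx => ?_)
    · have h := c1_bound_dm hfin3 (Real.sqrt_nonneg _) (Real.sqrt_nonneg _) hx
      have h2 := pow_le_pow_left₀ (Real.sqrt_nonneg _) h 2
      rw [Real.sq_sqrt (quadG_nonneg (hpsd x) _ _), mul_pow, sq_rpow (sigmaW_pos x).le] at h2
      linarith [h2]
    · have h := c1_bound_m hfin3 (Real.sqrt_nonneg _) (Real.sqrt_nonneg _) hx
      have h2 := pow_le_pow_left₀ (Real.sqrt_nonneg _) h 2
      rw [Real.sq_sqrt (vecQuad_nonneg (hpsd x) _), mul_pow, sq_rpow (sigmaW_pos x).le] at h2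
      linarith [h2]
  -- combine
  have hBN : BNorm β ρ₀ L0 φ = B1 + B2 + B3 := rfl
  have hS0 : 0 ≤ BNorm β ρ₀ L0 φ := by rw [hBN]; linarith
  have hHsplit : HNormSq ρ₀ L0 φ =
      (∫ x : E3, (‖grad φ.v x‖ ^ 2 / ‖x‖ ^ 2 + φ.v x ^ 2 / ‖x‖ ^ 4)) +
      (∫ x in Omg ρ₀, (gradMatAbsSq φ.L x / cylRho x ^ 2 + matAbsSq (φ.L x) / cylRho x ^ 4)) +
      (∫ x in Omg ρ₀, (quadG (L0 x)⁻¹ φ.Y φ.Y x / cylRho x ^ 2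
        + vecQuad (L0 x)⁻¹ (φ.Y x) (φ.Y x) / cylRho x ^ 4)) := rfl
  have hHN : HNormSq ρ₀ L0 φ ≤ D * BNorm β ρ₀ L0 φ ^ 2 := by
    have hsq1 : B1 ^ 2 ≤ (B1 + B2 + B3) ^ 2 := by nlinarith
    have hsq2 : B2 ^ 2 ≤ (B1 + B2 + B3) ^ 2 := by nlinarith
    have hsq3 : B3 ^ 2 ≤ (B1 + B2 + B3) ^ 2 := by nlinarith
    have hKVIG : 0 ≤ KVc β * IG := mul_nonneg hKV hIG0
    have hKMIG : 0 ≤ KMc ρ₀ * IG := mul_nonneg hKM hIG0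
    rw [hHsplit, hBN]
    calc (∫ x : E3, (‖grad φ.v x‖ ^ 2 / ‖x‖ ^ 2 + φ.v x ^ 2 / ‖x‖ ^ 4)) +
        (∫ x in Omg ρ₀, (gradMatAbsSq φ.L x / cylRho x ^ 2 + matAbsSq (φ.L x) / cylRho x ^ 4)) +
        (∫ x in Omg ρ₀, (quadG (L0 x)⁻¹ φ.Y φ.Y x / cylRho x ^ 2
          + vecQuad (L0 x)⁻¹ (φ.Y x) (φ.Y x) / cylRho x ^ 4))
        ≤ B1 ^ 2 * (KVc β * IG) + B2 ^ 2 * (KMc ρ₀ * IG) + B3 ^ 2 * (KMc ρ₀ * IG) :=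
          add_le_add (add_le_add hI1 hI2) hI3
      _ ≤ (B1 + B2 + B3) ^ 2 * (KVc β * IG) + (B1 + B2 + B3) ^ 2 * (KMc ρ₀ * IG)
          + (B1 + B2 + B3) ^ 2 * (KMc ρ₀ * IG) :=
          add_le_add (add_le_add (mul_le_mul_of_nonneg_right hsq1 hKVIG)
            (mul_le_mul_of_nonneg_right hsq2 hKMIG)) (mul_le_mul_of_nonneg_right hsq3 hKMIG)
      _ = (KVc β * IG + KMc ρ₀ * IG + KMc ρ₀ * IG) * (B1 + B2 + B3) ^ 2 := by ring
      _ ≤ D * (B1 + B2 + B3) ^ 2 := by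
          apply mul_le_mul_of_nonneg_right _ (sq_nonneg _)
          rw [hDdef]
          linarith
  calc Real.sqrt (HNormSq ρ₀ L0 φ) ≤ Real.sqrt (D * BNorm β ρ₀ L0 φ ^ 2) :=
        Real.sqrt_le_sqrt hHN
    _ = Real.sqrt D * BNorm β ρ₀ L0 φ := by
        rw [Real.sqrt_mul (by linarith) _, Real.sqrt_sq hS0]

end BHMass
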